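/- Let G be a maximal plane graph with outer edge (v_1,v_n) and Hamiltonian cycle v_1,v_2,...,v_n. The Hamiltonian cycle is one-legged (no vertex v_j has both a neighbor v_i in the left graph G_l with i < j-1 and a neighbor v_k in the right graph G_r with k < j-1) if and only if for every i = 2,...,n, the edge (v_{i-1}, v_i) lies on the outer face of the subgraph G_i induced by v_1,...,v_i. -/

import Mathlib

open Set

/- Setting: a Hamiltonian maximal plane graph `G` with Hamiltonian cycle
`v_1, ..., v_n` (0-indexed `0, ..., n-1`) and edge `(v_1, v_n)` on the outer face.
The cycle splits `G` into the left graph `G_l` (edge set `El`) and the right graph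
`G_r` (edge set `Er`); edges are recorded as pairs `(i, j)` with `i < j`.  The graph is
drawn with vertex `j` at the point `(0, j)` on a vertical line, each edge as a
`y`-monotone curve `γ e`, edges of `G_l` in the left half-plane, edges of `G_r` in the
right half-plane (Hamiltonian path edges on the line), pairwise internally disjoint. -/

/-- The drawn point set of the subgraph `G_{m+1}` induced by the vertices `0, ..., m`. -/
noncomputable def drawingSet (E : Finset (ℕ × ℕ)) (γ : ℕ × ℕ → ℝ → ℝ × ℝ) (m : ℕ) :
    Set (ℝ × ℝ) :=
  ⋃ e ∈ E.filter (fun e => e.2 ≤ m), γ e '' Set.Icc (0 : ℝ) 1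

/-- The point `p` (of the drawing `U`) lies on the boundary of the outer (unbounded)
face: arbitrarily close to `p` there are points of the complement of `U` whose
connected component in the complement is unbounded. -/
def OnOuterFace (U : Set (ℝ × ℝ)) (p : ℝ × ℝ) : Prop :=
  ∀ ε > 0, ∃ q, q ∉ U ∧ dist q p < ε ∧
    ¬ Bornology.IsBounded (connectedComponentIn Uᶜ q)

/-- Vertex `j` is two-legged: it has a neighbour `v_i` in `G_l` with `i < j - 1` and a
neighbour `v_k` in `G_r` with `k < j - 1`. -/
def TwoLegged (El Er : Finset (ℕ × ℕ)) (j : ℕ) : Prop :=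
  (∃ i, i + 1 < j ∧ (i, j) ∈ El) ∧ (∃ k, k + 1 < j ∧ (k, j) ∈ Er)

lemma mem_drawingSet {E : Finset (ℕ × ℕ)} {γ : ℕ × ℕ → ℝ → ℝ × ℝ} {m : ℕ} {p : ℝ × ℝ} :
    p ∈ drawingSet E γ m ↔ ∃ e ∈ E, e.2 ≤ m ∧ ∃ t ∈ Icc (0:ℝ) 1, γ e t = p := by
  simp only [drawingSet, mem_iUnion, Finset.mem_filter, mem_image, exists_prop]
  constructor
  · rintro ⟨e, ⟨he, h2⟩, t, ht, hp⟩
    exact ⟨e, he, h2, t, ht, hp⟩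
  · rintro ⟨e, he, h2, t, ht, hp⟩
    exact ⟨e, ⟨he, h2⟩, t, ht, hp⟩


lemma curve_graph (g : ℝ → ℝ × ℝ) (A B : ℝ) (hAB : A < B)
    (hc : ContinuousOn g (Icc 0 1))
    (hm : StrictMonoOn (fun t => (g t).2) (Icc 0 1))
    (h0 : g 0 = (0, A)) (h1 : g 1 = (0, B)) :
    ∃ ℓ : ℝ → ℝ, Continuous ℓ ∧ ℓ A = 0 ∧ ℓ B = 0 ∧
      (∀ s ∈ Icc A B, (ℓ s, s) ∈ g '' Icc 0 1) ∧
      (∀ s ∈ Ioo A B, (ℓ s, s) ∈ g '' Ioo 0 1) ∧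
      (∀ t ∈ Icc (0:ℝ) 1, (g t).1 = ℓ (g t).2) := by
  set h : ℝ → ℝ := fun t => (g t).2 with hh_def
  have hh : ContinuousOn h (Icc 0 1) := continuous_snd.comp_continuousOn hc
  have hA : h 0 = A := by simp [hh_def, h0]
  have hB : h 1 = B := by simp [hh_def, h1]
  have hsurj : ∀ s ∈ Icc A B, ∃ t ∈ Icc (0:ℝ) 1, h t = s := by
    intro s hs
    have := intermediate_value_Icc (zero_le_one (α := ℝ)) hh
    rw [hA, hB] at this
    obtain ⟨t, ht, hts⟩ := this hs
    exact ⟨t, ht, hts⟩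
  set σ0 : ℝ → ℝ := Function.invFunOn h (Icc 0 1) with hσ0_def
  have hσ0 : ∀ s ∈ Icc A B, σ0 s ∈ Icc (0:ℝ) 1 ∧ h (σ0 s) = s := fun s hs =>
    ⟨Function.invFunOn_mem (by simpa using hsurj s hs),
     Function.invFunOn_eq (by simpa using hsurj s hs)⟩
  set σf : ℝ → ℝ := fun s => if s ≤ A then s - A else if B ≤ s then 1 + (s - B) else σ0 s
    with hσf_def
  have hmono : Monotone σf := by
    intro s1 s2 hle
    simp only [hσf_def]
    rcases le_or_gt s1 A with hs1 | hs1
    · rw [if_pos hs1]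
      rcases le_or_gt s2 A with hs2 | hs2
      · rw [if_pos hs2]; linarith
      · rw [if_neg (not_le.mpr hs2)]
        rcases le_or_gt B s2 with hb2 | hb2
        · rw [if_pos hb2]; linarith
        · rw [if_neg (not_le.mpr hb2)]
          have := (hσ0 s2 ⟨le_of_lt hs2, le_of_lt hb2⟩).1
          have h01 : (0:ℝ) ≤ σ0 s2 := this.1
          linarith
    · rw [if_neg (not_le.mpr hs1), if_neg (not_le.mpr (lt_of_lt_of_le hs1 hle))]
      rcases le_or_gt B s1 with hb1 | hb1
      · rw [if_pos hb1, if_pos (le_trans hb1 hle)]; linarith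
      · rw [if_neg (not_le.mpr hb1)]
        have H1 := hσ0 s1 ⟨le_of_lt hs1, le_of_lt hb1⟩
        rcases le_or_gt B s2 with hb2 | hb2
        · rw [if_pos hb2]
          have := H1.1.2; linarith
        · rw [if_neg (not_le.mpr hb2)]
          have H2 := hσ0 s2 ⟨le_of_lt (lt_of_lt_of_le hs1 hle), le_of_lt hb2⟩
          have : h (σ0 s1) ≤ h (σ0 s2) := by rw [H1.2, H2.2]; exact hle
          exact (hm.le_iff_le H1.1 H2.1).mp this
  have hsurjf : Function.Surjective σf := by
    intro y
    rcases le_or_gt y 0 with hy | hy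
    · exact ⟨y + A, by simp [hσf_def, hy, show y + A ≤ A by linarith]⟩
    · rcases le_or_gt 1 y with hy1 | hy1
      · refine ⟨y - 1 + B, ?_⟩
        have c1 : ¬ (y - 1 + B ≤ A) := by push_neg; linarith
        have c2 : B ≤ y - 1 + B := by linarith
        simp only [hσf_def, if_neg c1, if_pos c2]; ring
      · refine ⟨h y, ?_⟩
        have hyI : y ∈ Icc (0:ℝ) 1 := ⟨le_of_lt hy, le_of_lt hy1⟩
        have c1 : A < h y := by
          rw [← hA]; exact hm (left_mem_Icc.mpr zero_le_one) hyI hy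
        have c2 : h y < B := by
          rw [← hB]; exact hm hyI (right_mem_Icc.mpr zero_le_one) hy1
        have H := hσ0 (h y) ⟨le_of_lt c1, le_of_lt c2⟩
        have : σ0 (h y) = y := hm.injOn H.1 hyI H.2
        simp only [hσf_def, if_neg (not_le.mpr c1), if_neg (not_le.mpr c2)]
        exact this
  have hcf : Continuous σf := hmono.continuous_of_surjective hsurjf
  set σc : ℝ → ℝ := fun s => max 0 (min 1 (σf s)) with hσc_def
  have hcc : Continuous σc := continuous_const.max (continuous_const.min hcf)
  have hcmem : ∀ s, σc s ∈ Icc (0:ℝ) 1 := fun s =>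
    ⟨le_max_left _ _, max_le zero_le_one (min_le_left _ _)⟩
  have key : ∀ s ∈ Icc A B, h (σc s) = s := by
    intro s hs
    simp only [hσc_def, hσf_def]
    rcases le_or_gt s A with h1' | h1'
    · have : s = A := le_antisymm h1' hs.1
      subst this
      simp [hA]
    · rw [if_neg (not_le.mpr h1')]
      rcases le_or_gt B s with h2' | h2'
      · have : s = B := le_antisymm hs.2 h2'
        subst this
        rw [if_pos le_rfl]
        norm_num [hB]
      · rw [if_neg (not_le.mpr h2')]
        have H := hσ0 s ⟨le_of_lt h1', le_of_lt h2'⟩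
        rw [min_eq_right H.1.2, max_eq_right H.1.1]
        exact H.2
  refine ⟨fun s => (g (σc s)).1,
    (continuous_fst.comp_continuousOn hc).comp_continuous hcc hcmem, ?_, ?_, ?_, ?_, ?_⟩
  · have : σc A = 0 := hm.injOn (hcmem A) (left_mem_Icc.mpr zero_le_one)
      (by rw [key A (left_mem_Icc.mpr (le_of_lt hAB)), ← hA])
    show (g (σc A)).1 = 0
    rw [this, h0]
  · have : σc B = 1 := hm.injOn (hcmem B) (right_mem_Icc.mpr zero_le_one)
      (by rw [key B (right_mem_Icc.mpr (le_of_lt hAB)), ← hB])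
    show (g (σc B)).1 = 0
    rw [this, h1]
  · intro s hs
    exact ⟨σc s, hcmem s, Prod.ext rfl (key s hs)⟩
  · intro s hs
    have hsI : s ∈ Icc A B := Ioo_subset_Icc_self hs
    refine ⟨σc s, ⟨?_, ?_⟩, Prod.ext rfl (key s hsI)⟩
    · rcases lt_or_eq_of_le (hcmem s).1 with h' | h'
      · exact h'
      · exfalso
        have : h (σc s) = A := by rw [← h', hA]
        rw [key s hsI] at this
        exact absurd this (ne_of_gt hs.1)
    · rcases lt_or_eq_of_le (hcmem s).2 with h' | h'
      · exact h'
      · exfalso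
        have : h (σc s) = B := by rw [h', hB]
        rw [key s hsI] at this
        exact absurd this (ne_of_lt hs.2)
  · intro t ht
    have hsI : h t ∈ Icc A B := by
      constructor
      · rw [← hA]; exact hm.monotoneOn (left_mem_Icc.mpr zero_le_one) ht ht.1
      · rw [← hB]; exact hm.monotoneOn ht (right_mem_Icc.mpr zero_le_one) ht.2
    have : σc (h t) = t := hm.injOn (hcmem _) ht (key _ hsI)
    show (g t).1 = (g (σc (h t))).1
    rw [this]


/-- The Hamiltonian cycle is one-legged (no vertex is two-legged) if and
only if for every `i = 1, ..., n-1` (1-indexed: `i = 2, ..., n`) the edge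
`(v_{i-1}, v_i)` lies on the outer face of the subgraph induced by `v_0, ..., v_i`. -/
theorem stmt_4 (n : ℕ) (hn : 4 ≤ n) (El Er : Finset (ℕ × ℕ))
    (hElb : ∀ e ∈ El, e.1 < e.2 ∧ e.2 < n) (hErb : ∀ e ∈ Er, e.1 < e.2 ∧ e.2 < n)
    (hpathl : ∀ i, i + 1 < n → (i, i + 1) ∈ El)
    (hpathr : ∀ i, i + 1 < n → (i, i + 1) ∈ Er)
    (hwrapl : (0, n - 1) ∈ El) (hwrapr : (0, n - 1) ∉ Er)
    (γ : ℕ × ℕ → ℝ → ℝ × ℝ)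
    (hcont : ∀ e ∈ El ∪ Er, ContinuousOn (γ e) (Icc 0 1))
    (hends : ∀ e ∈ El ∪ Er, γ e 0 = (0, (e.1 : ℝ)) ∧ γ e 1 = (0, (e.2 : ℝ)))
    (hmono : ∀ e ∈ El ∪ Er, StrictMonoOn (fun t => (γ e t).2) (Icc 0 1))
    (hleft : ∀ e ∈ El, ∀ t ∈ Icc (0 : ℝ) 1, (γ e t).1 ≤ 0)
    (hright : ∀ e ∈ Er, ∀ t ∈ Icc (0 : ℝ) 1, 0 ≤ (γ e t).1)
    (hsimple : ∀ e ∈ El ∪ Er, ∀ f ∈ El ∪ Er, e ≠ f →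
      (γ e '' Ioo (0 : ℝ) 1) ∩ (γ f '' Ioo (0 : ℝ) 1) = ∅)
    (hvx : ∀ e ∈ El ∪ Er, ∀ t ∈ Ioo (0 : ℝ) 1, ∀ j, j < n → γ e t ≠ (0, (j : ℝ))) :
    (∀ j < n, ¬ TwoLegged El Er j) ↔
      (∀ i, 1 ≤ i → i < n → ∃ t ∈ Ioo (0 : ℝ) 1,
        OnOuterFace (drawingSet (El ∪ Er) γ i) (γ (i - 1, i) t)) := by
  -- y-coordinate bounds along every edge
  have ybound : ∀ e ∈ El ∪ Er, ∀ t ∈ Icc (0:ℝ) 1,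
      (e.1:ℝ) ≤ (γ e t).2 ∧ (γ e t).2 ≤ (e.2:ℝ) := by
    intro e he t ht
    have h0 := (hends e he).1
    have h1 := (hends e he).2
    have m := (hmono e he).monotoneOn
    constructor
    · have := m (left_mem_Icc.mpr zero_le_one) ht ht.1
      simpa [h0] using this
    · have := m ht (right_mem_Icc.mpr zero_le_one) ht.2
      simpa [h1] using this
  -- the vertical segment {0} × [0, m] is part of the drawing of stage m
  have haxis : ∀ m : ℕ, 1 ≤ m → m < n → ∀ s : ℝ, 0 ≤ s → s ≤ (m:ℝ) →
      (0, s) ∈ drawingSet (El ∪ Er) γ m := by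
    intro m hm1 hmn s hs0 hsm
    obtain ⟨k, hk1, hks, hsk⟩ : ∃ k : ℕ, k + 1 ≤ m ∧ (k:ℝ) ≤ s ∧ s ≤ (k:ℝ) + 1 := by
      rcases le_or_gt (⌊s⌋₊ + 1) m with hb | hb
      · refine ⟨⌊s⌋₊, hb, Nat.floor_le hs0, (Nat.lt_floor_add_one s).le⟩
      · refine ⟨m - 1, by omega, ?_, ?_⟩
        · have h1 : (m:ℝ) ≤ (⌊s⌋₊ : ℝ) := by exact_mod_cast Nat.le_of_lt_succ hb
          have h2 : (⌊s⌋₊ : ℝ) ≤ s := Nat.floor_le hs0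
          have h3 : ((m-1:ℕ):ℝ) = (m:ℝ) - 1 := by
            push_cast [Nat.cast_sub hm1]; ring
          linarith
        · have h3 : ((m-1:ℕ):ℝ) = (m:ℝ) - 1 := by
            push_cast [Nat.cast_sub hm1]; ring
          linarith
    have hkn : k + 1 < n := lt_of_le_of_lt hk1 hmn
    have heEl : ((k, k+1) : ℕ × ℕ) ∈ El := hpathl k hkn
    have heEU : ((k, k+1) : ℕ × ℕ) ∈ El ∪ Er := Finset.mem_union_left _ heEl
    have hh : ContinuousOn (fun t => (γ (k, k+1) t).2) (Icc 0 1) :=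
      continuous_snd.comp_continuousOn (hcont _ heEU)
    have hiv := intermediate_value_Icc (zero_le_one (α := ℝ)) hh
    have h0 := (hends _ heEU).1
    have h1 := (hends _ heEU).2
    have hs' : s ∈ Icc ((γ (k,k+1) 0).2) ((γ (k,k+1) 1).2) := by
      rw [h0, h1]
      constructor
      · simpa using hks
      · simpa [Nat.cast_add] using hsk
    obtain ⟨t, ht, hts⟩ := hiv hs'
    have hx : (γ (k, k+1) t).1 = 0 :=
      le_antisymm (hleft _ heEl t ht) (hright _ (hpathr k hkn) t ht)
    refine mem_drawingSet.mpr ⟨(k, k+1), heEU, hk1, t, ht, ?_⟩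
    exact Prod.ext hx hts
  constructor
  · -- one-legged → every path edge on the outer face
    intro hOL i hi1 hin
    have hii : i - 1 + 1 = i := by omega
    have hedgeL : ((i-1, i) : ℕ × ℕ) ∈ El := by
      have := hpathl (i-1) (by omega)
      rwa [hii] at this
    have hedgeR : ((i-1, i) : ℕ × ℕ) ∈ Er := by
      have := hpathr (i-1) (by omega)
      rwa [hii] at this
    have heEU : ((i-1, i) : ℕ × ℕ) ∈ El ∪ Er := Finset.mem_union_left _ hedgeL
    have hhalf : (1/2 : ℝ) ∈ Icc (0:ℝ) 1 := by norm_num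
    refine ⟨1/2, by norm_num, ?_⟩
    set p := γ (i-1, i) (1/2) with hp_def
    have hp1 : p.1 = 0 :=
      le_antisymm (hleft _ hedgeL _ hhalf) (hright _ hedgeR _ hhalf)
    have hcast : (((i-1 : ℕ)) : ℝ) = (i:ℝ) - 1 := by
      push_cast [Nat.cast_sub hi1]; ring
    have hplow : (i:ℝ) - 1 < p.2 := by
      rw [← hcast]
      have h : (γ (i-1,i) 0).2 < (γ (i-1,i) (1/2)).2 :=
        hmono _ heEU (left_mem_Icc.mpr zero_le_one) hhalf (by norm_num)
      rwa [(hends _ heEU).1] at h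
    have hphigh : p.2 < (i:ℝ) := by
      have h : (γ (i-1,i) (1/2)).2 < (γ (i-1,i) 1).2 :=
        hmono _ heEU hhalf (right_mem_Icc.mpr zero_le_one) (by norm_num)
      rwa [(hends _ heEU).2] at h
    intro ε hε
    rcases not_and_or.mp (hOL i hin) with hNL | hNR
    · -- no left leg at i : escape to the left
      set x0 : ℝ := -(ε/2) with hx0_def
      have hx0neg : x0 < 0 := by simp [hx0_def]; linarith
      have hray : ∀ s : ℝ, p.2 ≤ s → (x0, s) ∉ drawingSet (El ∪ Er) γ i := by
        intro s hps hmem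
        obtain ⟨e, heU, he2, t, ht, hgt⟩ := mem_drawingSet.mp hmem
        have hx : (γ e t).1 = x0 := by rw [hgt]
        have heEl : e ∈ El := by
          rcases Finset.mem_union.mp heU with h | h
          · exact h
          · exfalso
            have := hright e h t ht
            rw [hx] at this; linarith
        have hy : (γ e t).2 = s := by rw [hgt]
        have h2 : (i:ℝ) - 1 < (e.2:ℝ) := by
          have := (ybound e heU t ht).2
          rw [hy] at this; linarith
        have he2i : e.2 = i := by
          have : (i:ℝ) < (e.2:ℝ) + 1 := by linarith
          have : i < e.2 + 1 := by exact_mod_cast this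
          omega
        have he1 : e.1 + 1 ≤ i := by
          have := (hElb e heEl).1; omega
        rcases eq_or_lt_of_le he1 with hcase | hcase
        · -- e is the path edge (i-1, i), drawn on the axis
          have hee : e = (i-1, i) := by
            have : e = (e.1, e.2) := rfl
            rw [this, he2i]
            have : e.1 = i - 1 := by omega
            rw [this]
          have := hright _ hedgeR t ht
          rw [← hee, hx] at this
          linarith
        · exact hNL ⟨e.1, hcase, by rwa [show ((e.1, i) : ℕ × ℕ) = e from by rw [← he2i]]⟩
      refine ⟨(x0, p.2), hray p.2 le_rfl, ?_, ?_⟩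
      · have : p = (0, p.2) := Prod.ext hp1 rfl
        rw [this, Prod.dist_eq]
        simp [Real.dist_eq, hx0_def, abs_of_pos hε]
        linarith
      · intro hb
        obtain ⟨r, hr⟩ := hb.subset_closedBall (0 : ℝ × ℝ)
        have hconn : IsPreconnected ((fun u => ((x0 : ℝ), u)) '' Ici p.2) :=
          isPreconnected_Ici.image _ (Continuous.continuousOn (Continuous.prodMk_right x0))
        have hsub : ((fun u => ((x0:ℝ), u)) '' Ici p.2) ⊆ (drawingSet (El ∪ Er) γ i)ᶜ := by
          rintro w ⟨u, hu, rfl⟩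
          exact hray u hu
        have hmemR : (x0, p.2) ∈ (fun u => ((x0:ℝ), u)) '' Ici p.2 :=
          ⟨p.2, Set.self_mem_Ici, rfl⟩
        have hsubC := hconn.subset_connectedComponentIn hmemR hsub
        set s := max p.2 (|r| + 1) with hs_def
        have hsR : (x0, s) ∈ connectedComponentIn (drawingSet (El ∪ Er) γ i)ᶜ (x0, p.2) :=
          hsubC ⟨s, Set.mem_Ici.mpr (le_max_left _ _), rfl⟩
        have hball := hr hsR
        rw [Metric.mem_closedBall, Prod.dist_eq] at hball
        have h2 : dist s (0:ℝ) ≤ r := le_trans (le_max_right _ _) hball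
        rw [Real.dist_eq] at h2
        have h3 : s - 0 ≤ |s - 0| := le_abs_self _
        have h4 : r ≤ |r| := le_abs_self r
        have h5 : |r| + 1 ≤ s := le_max_right _ _
        linarith
    · -- no right leg at i : escape to the right
      set x0 : ℝ := ε/2 with hx0_def
      have hx0pos : 0 < x0 := by simp [hx0_def]; linarith
      have hray : ∀ s : ℝ, p.2 ≤ s → (x0, s) ∉ drawingSet (El ∪ Er) γ i := by
        intro s hps hmem
        obtain ⟨e, heU, he2, t, ht, hgt⟩ := mem_drawingSet.mp hmem
        have hx : (γ e t).1 = x0 := by rw [hgt]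
        have heEr : e ∈ Er := by
          rcases Finset.mem_union.mp heU with h | h
          · exfalso
            have := hleft e h t ht
            rw [hx] at this; linarith
          · exact h
        have hy : (γ e t).2 = s := by rw [hgt]
        have h2 : (i:ℝ) - 1 < (e.2:ℝ) := by
          have := (ybound e heU t ht).2
          rw [hy] at this; linarith
        have he2i : e.2 = i := by
          have : (i:ℝ) < (e.2:ℝ) + 1 := by linarith
          have : i < e.2 + 1 := by exact_mod_cast this
          omega
        have he1 : e.1 + 1 ≤ i := by
          have := (hErb e heEr).1; omega
        rcases eq_or_lt_of_le he1 with hcase | hcase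
        · have hee : e = (i-1, i) := by
            have : e = (e.1, e.2) := rfl
            rw [this, he2i]
            have : e.1 = i - 1 := by omega
            rw [this]
          have := hleft _ hedgeL t ht
          rw [← hee, hx] at this
          linarith
        · exact hNR ⟨e.1, hcase, by rwa [show ((e.1, i) : ℕ × ℕ) = e from by rw [← he2i]]⟩
      refine ⟨(x0, p.2), hray p.2 le_rfl, ?_, ?_⟩
      · have : p = (0, p.2) := Prod.ext hp1 rfl
        rw [this, Prod.dist_eq]
        simp [Real.dist_eq, hx0_def, abs_of_pos hε]
        linarith
      · intro hb
        obtain ⟨r, hr⟩ := hb.subset_closedBall (0 : ℝ × ℝ)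
        have hconn : IsPreconnected ((fun u => ((x0 : ℝ), u)) '' Ici p.2) :=
          isPreconnected_Ici.image _ (Continuous.continuousOn (Continuous.prodMk_right x0))
        have hsub : ((fun u => ((x0:ℝ), u)) '' Ici p.2) ⊆ (drawingSet (El ∪ Er) γ i)ᶜ := by
          rintro w ⟨u, hu, rfl⟩
          exact hray u hu
        have hmemR : (x0, p.2) ∈ (fun u => ((x0:ℝ), u)) '' Ici p.2 :=
          ⟨p.2, Set.self_mem_Ici, rfl⟩
        have hsubC := hconn.subset_connectedComponentIn hmemR hsub
        set s := max p.2 (|r| + 1) with hs_def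
        have hsR : (x0, s) ∈ connectedComponentIn (drawingSet (El ∪ Er) γ i)ᶜ (x0, p.2) :=
          hsubC ⟨s, Set.mem_Ici.mpr (le_max_left _ _), rfl⟩
        have hball := hr hsR
        rw [Metric.mem_closedBall, Prod.dist_eq] at hball
        have h2 : dist s (0:ℝ) ≤ r := le_trans (le_max_right _ _) hball
        rw [Real.dist_eq] at h2
        have h3 : s - 0 ≤ |s - 0| := le_abs_self _
        have h4 : r ≤ |r| := le_abs_self r
        have h5 : |r| + 1 ≤ s := le_max_right _ _
        linarith
  · -- outer-face condition → one-legged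
    intro hRHS j hjn hTL
    obtain ⟨⟨a, haj, haEl⟩, ⟨b, hbj, hbEr⟩⟩ := hTL
    have hj1 : 1 ≤ j := by omega
    obtain ⟨t, htI, hout⟩ := hRHS j hj1 hjn
    have hjj : j - 1 + 1 = j := by omega
    have hedgeL : ((j-1, j) : ℕ × ℕ) ∈ El := by
      have := hpathl (j-1) (by omega); rwa [hjj] at this
    have hedgeR : ((j-1, j) : ℕ × ℕ) ∈ Er := by
      have := hpathr (j-1) (by omega); rwa [hjj] at this
    have heEU : ((j-1, j) : ℕ × ℕ) ∈ El ∪ Er := Finset.mem_union_left _ hedgeL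
    have htIcc : t ∈ Icc (0:ℝ) 1 := Ioo_subset_Icc_self htI
    set p := γ (j-1, j) t with hp_def
    have hp1 : p.1 = 0 := le_antisymm (hleft _ hedgeL _ htIcc) (hright _ hedgeR _ htIcc)
    have hcast : (((j-1 : ℕ)) : ℝ) = (j:ℝ) - 1 := by push_cast [Nat.cast_sub hj1]; ring
    have hplow : (j:ℝ) - 1 < p.2 := by
      rw [← hcast]
      have h : (γ (j-1,j) 0).2 < (γ (j-1,j) t).2 :=
        hmono _ heEU (left_mem_Icc.mpr zero_le_one) htIcc htI.1
      rwa [(hends _ heEU).1] at h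
    have hphigh : p.2 < (j:ℝ) := by
      have h : (γ (j-1,j) t).2 < (γ (j-1,j) 1).2 :=
        hmono _ heEU htIcc (right_mem_Icc.mpr zero_le_one) htI.2
      rwa [(hends _ heEU).2] at h
    have haEU : ((a, j) : ℕ × ℕ) ∈ El ∪ Er := Finset.mem_union_left _ haEl
    have hbEU : ((b, j) : ℕ × ℕ) ∈ El ∪ Er := Finset.mem_union_right _ hbEr
    have hcastA : (a:ℝ) < (j:ℝ) - 1 := by
      have : ((a:ℝ)) + 2 ≤ (j:ℝ) := by exact_mod_cast (by omega : a + 2 ≤ j)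
      linarith
    have hcastB : (b:ℝ) < (j:ℝ) - 1 := by
      have : ((b:ℝ)) + 2 ≤ (j:ℝ) := by exact_mod_cast (by omega : b + 2 ≤ j)
      linarith
    obtain ⟨l, hlc, hlA, hlB, hlIcc, hlIoo, hlall⟩ :=
      curve_graph (γ (a,j)) (a:ℝ) (j:ℝ) (by linarith) (hcont _ haEU) (hmono _ haEU)
        (hends _ haEU).1 (hends _ haEU).2
    obtain ⟨r, hrc, hrA, hrB, hrIcc, hrIoo, hrall⟩ :=
      curve_graph (γ (b,j)) (b:ℝ) (j:ℝ) (by linarith) (hcont _ hbEU) (hmono _ hbEU)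
        (hends _ hbEU).1 (hends _ hbEU).2
    -- interior points of the path edge (j-1,j) fill the axis strictly between j-1 and j
    have haxis0 : ∀ s : ℝ, (j:ℝ) - 1 < s → s < j → ((0:ℝ), s) ∈ γ (j-1, j) '' Ioo 0 1 := by
      intro s hs1 hs2
      obtain ⟨l0, _, _, _, _, hl0Ioo, _⟩ := curve_graph (γ (j-1,j)) ((j-1:ℕ):ℝ) (j:ℝ)
        (by rw [hcast]; linarith) (hcont _ heEU) (hmono _ heEU)
        (hends _ heEU).1 (hends _ heEU).2
      have hm0 : (l0 s, s) ∈ γ (j-1,j) '' Ioo 0 1 := hl0Ioo s ⟨by rw [hcast]; linarith, hs2⟩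
      obtain ⟨t', ht', heq⟩ := hm0
      have hl0 : l0 s = 0 := by
        have h' : (γ (j-1,j) t').1 = l0 s := by rw [heq]
        rw [← h']
        exact le_antisymm (hleft _ hedgeL t' (Ioo_subset_Icc_self ht'))
          (hright _ hedgeR t' (Ioo_subset_Icc_self ht'))
      exact ⟨t', ht', by rw [heq, hl0]⟩
    have hlneg : ∀ s : ℝ, (j:ℝ) - 1 < s → s < j → l s < 0 := by
      intro s hs1 hs2
      have hsI : s ∈ Ioo (a:ℝ) (j:ℝ) := ⟨by linarith, hs2⟩
      obtain ⟨t', ht', heq⟩ := hlIoo s hsI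
      have hle : l s ≤ 0 := by
        have h' : (γ (a,j) t').1 = l s := by rw [heq]
        rw [← h']; exact hleft _ haEl t' (Ioo_subset_Icc_self ht')
      rcases lt_or_eq_of_le hle with h | h
      · exact h
      · exfalso
        have hne : ((a, j) : ℕ × ℕ) ≠ (j-1, j) := by
          intro hcon
          have : a = j - 1 := by
            have := congrArg Prod.fst hcon; simpa using this
          omega
        have hempty := hsimple _ haEU _ heEU hne
        have hmem1 : ((0:ℝ), s) ∈ γ (a,j) '' Ioo 0 1 := ⟨t', ht', by rw [heq, h]⟩
        have hmem2 := haxis0 s hs1 hs2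
        have : ((0:ℝ), s) ∈ (γ (a,j) '' Ioo 0 1) ∩ (γ (j-1,j) '' Ioo 0 1) := ⟨hmem1, hmem2⟩
        rw [hempty] at this
        exact this
    have hrpos : ∀ s : ℝ, (j:ℝ) - 1 < s → s < j → 0 < r s := by
      intro s hs1 hs2
      have hsI : s ∈ Ioo (b:ℝ) (j:ℝ) := ⟨by linarith, hs2⟩
      obtain ⟨t', ht', heq⟩ := hrIoo s hsI
      have hle : 0 ≤ r s := by
        have h' : (γ (b,j) t').1 = r s := by rw [heq]
        rw [← h']; exact hright _ hbEr t' (Ioo_subset_Icc_self ht')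
      rcases lt_or_eq_of_le hle with h | h
      · exact h
      · exfalso
        have hne : ((b, j) : ℕ × ℕ) ≠ (j-1, j) := by
          intro hcon
          have : b = j - 1 := by
            have := congrArg Prod.fst hcon; simpa using this
          omega
        have hempty := hsimple _ hbEU _ heEU hne
        have hmem1 : ((0:ℝ), s) ∈ γ (b,j) '' Ioo 0 1 := ⟨t', ht', by rw [heq, ← h]⟩
        have hmem2 := haxis0 s hs1 hs2
        have : ((0:ℝ), s) ∈ (γ (b,j) '' Ioo 0 1) ∩ (γ (j-1,j) '' Ioo 0 1) := ⟨hmem1, hmem2⟩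
        rw [hempty] at this
        exact this
    set d : ℝ := min (p.2 - ((j:ℝ) - 1)) ((j:ℝ) - p.2) / 2 with hd_def
    have hd : 0 < d := by
      rw [hd_def]
      apply div_pos (lt_min (by linarith) (by linarith)) two_pos
    have hdle1 : 2 * d ≤ p.2 - ((j:ℝ) - 1) := by
      rw [hd_def]; linarith [min_le_left (p.2 - ((j:ℝ) - 1)) ((j:ℝ) - p.2)]
    have hdle2 : 2 * d ≤ (j:ℝ) - p.2 := by
      rw [hd_def]; linarith [min_le_right (p.2 - ((j:ℝ) - 1)) ((j:ℝ) - p.2)]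
    have hI1 : ∀ s ∈ Icc (p.2 - d) (p.2 + d), (j:ℝ) - 1 < s ∧ s < j := by
      intro s hs
      exact ⟨by linarith [hs.1], by linarith [hs.2]⟩
    have hIne : (Icc (p.2 - d) (p.2 + d)).Nonempty := ⟨p.2, by constructor <;> linarith⟩
    obtain ⟨s₀, hs₀I, hs₀max⟩ := isCompact_Icc.exists_isMaxOn hIne hlc.continuousOn
    have hs₀neg : l s₀ < 0 := hlneg s₀ (hI1 s₀ hs₀I).1 (hI1 s₀ hs₀I).2
    obtain ⟨s₁, hs₁I, hs₁min⟩ := isCompact_Icc.exists_isMinOn hIne hrc.continuousOn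
    have hs₁pos : 0 < r s₁ := hrpos s₁ (hI1 s₁ hs₁I).1 (hI1 s₁ hs₁I).2
    set ε := min d (min (-(l s₀)) (r s₁)) with hε_def
    have hε : 0 < ε := lt_min hd (lt_min (by linarith) hs₁pos)
    obtain ⟨q, hqU, hqd, hqunb⟩ := hout ε hε
    rw [Prod.dist_eq] at hqd
    have hq1 : |q.1| < ε := by
      have h := lt_of_le_of_lt (le_max_left (dist q.1 p.1) (dist q.2 p.2)) hqd
      rwa [Real.dist_eq, hp1, sub_zero] at h
    have hq2 : |q.2 - p.2| < ε := by
      have h := lt_of_le_of_lt (le_max_right (dist q.1 p.1) (dist q.2 p.2)) hqd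
      rwa [Real.dist_eq] at h
    have hεd : ε ≤ d := min_le_left _ _
    have hεl : ε ≤ -(l s₀) := le_trans (min_le_right _ _) (min_le_left _ _)
    have hεr : ε ≤ r s₁ := le_trans (min_le_right _ _) (min_le_right _ _)
    have hq2I : q.2 ∈ Icc (p.2 - d) (p.2 + d) := by
      have h := abs_lt.mp hq2
      exact ⟨by linarith [h.1], by linarith [h.2]⟩
    have hq2b := hI1 q.2 hq2I
    have hjpos : (1:ℝ) ≤ (j:ℝ) := by exact_mod_cast hj1
    have hq1ne : q.1 ≠ 0 := by
      intro h0'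
      apply hqU
      have hq' : q = ((0:ℝ), q.2) := Prod.ext h0' rfl
      rw [hq']
      exact haxis j hj1 hjn q.2 (by linarith [hq2b.1]) (le_of_lt hq2b.2)
    have haq : |q.1| < ε := hq1
    rcases lt_or_gt_of_ne hq1ne with hqneg | hqpos
    · -- q is to the left of the axis : trapped between the left leg and the axis
      set W : Set (ℝ × ℝ) := Prod.snd ⁻¹' Ioo (a:ℝ) (j:ℝ) ∩
        ({w : ℝ × ℝ | l w.2 < w.1} ∩ {w : ℝ × ℝ | w.1 < 0}) with hW_def
      have hWopen : IsOpen W :=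
        (isOpen_Ioo.preimage continuous_snd).inter
          ((isOpen_lt (hlc.comp continuous_snd) continuous_fst).inter
            (isOpen_lt continuous_fst continuous_const))
      have hqW : q ∈ W := by
        refine ⟨⟨by linarith [hq2b.1], hq2b.2⟩, ?_, hqneg⟩
        have h1 : l q.2 ≤ l s₀ := hs₀max hq2I
        have h2 := (abs_lt.mp hq1).1
        show l q.2 < q.1
        linarith
      obtain ⟨s₂, hs₂I, hs₂min⟩ := isCompact_Icc.exists_isMinOn
        (nonempty_Icc.mpr (by linarith : (a:ℝ) ≤ (j:ℝ))) hlc.continuousOn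
      have hWb : Bornology.IsBounded W := by
        apply ((Metric.isBounded_Icc (l s₂) 0).prod (Metric.isBounded_Icc (a:ℝ) (j:ℝ))).subset
        rintro w ⟨hw1, hw2, hw3⟩
        refine ⟨⟨?_, le_of_lt hw3⟩, Ioo_subset_Icc_self hw1⟩
        have := hs₂min (Ioo_subset_Icc_self hw1)
        show l s₂ ≤ w.1
        calc l s₂ ≤ l w.2 := this
        _ ≤ w.1 := le_of_lt hw2
      have hclW : closure W ⊆ W ∪ drawingSet (El ∪ Er) γ j := by
        have hsub1 : closure W ⊆ Prod.snd ⁻¹' Icc (a:ℝ) (j:ℝ) ∩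
            ({w : ℝ × ℝ | l w.2 ≤ w.1} ∩ {w : ℝ × ℝ | w.1 ≤ 0}) := by
          apply closure_minimal
          · rintro w ⟨hw1, hw2, hw3⟩
            refine ⟨Ioo_subset_Icc_self hw1, ?_, ?_⟩
            · show l w.2 ≤ w.1; exact le_of_lt hw2
            · show w.1 ≤ 0; exact le_of_lt hw3
          · exact (isClosed_Icc.preimage continuous_snd).inter
              ((isClosed_le (hlc.comp continuous_snd) continuous_fst).inter
                (isClosed_le continuous_fst continuous_const))
        intro w hw
        obtain ⟨hw2, hwl, hwr⟩ := hsub1 hw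
        replace hwl : l w.2 ≤ w.1 := hwl
        replace hwr : w.1 ≤ 0 := hwr
        rcases eq_or_lt_of_le hwr with h0' | h0'
        · right
          have hw' : w = ((0:ℝ), w.2) := Prod.ext h0' rfl
          rw [hw']
          refine haxis j hj1 hjn w.2 ?_ hw2.2
          have : (0:ℝ) ≤ (a:ℝ) := Nat.cast_nonneg a
          linarith [hw2.1]
        · rcases eq_or_lt_of_le hwl with h1' | h1'
          · right
            have hw' : w = (l w.2, w.2) := Prod.ext h1'.symm rfl
            rw [hw']
            obtain ⟨t', ht', heq⟩ := hlIcc w.2 hw2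
            exact mem_drawingSet.mpr ⟨(a,j), haEU, le_rfl, t', ht', heq⟩
          · left
            refine ⟨⟨?_, ?_⟩, h1', h0'⟩
            · rcases eq_or_lt_of_le hw2.1 with h | h
              · exfalso
                rw [← h, hlA] at h1'
                linarith
              · exact h
            · rcases eq_or_lt_of_le hw2.2 with h | h
              · exfalso
                rw [h, hlB] at h1'
                linarith
              · exact h
      have hcover : (drawingSet (El ∪ Er) γ j)ᶜ ⊆ W ∪ (closure W)ᶜ := by
        intro u hu
        by_cases hc' : u ∈ closure W
        · rcases hclW hc' with h | h
          · exact Or.inl h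
          · exact absurd h hu
        · exact Or.inr hc'
      have hdisj : Disjoint W (closure W)ᶜ := by
        rw [Set.disjoint_left]
        intro x hx hx'
        exact hx' (subset_closure hx)
      have hKsub := IsPreconnected.subset_left_of_subset_union hWopen
        isClosed_closure.isOpen_compl hdisj
        (subset_trans (connectedComponentIn_subset _ _) hcover)
        ⟨q, mem_connectedComponentIn hqU, hqW⟩
        isPreconnected_connectedComponentIn
      exact hqunb (hWb.subset hKsub)
    · -- q is to the right of the axis : trapped between the axis and the right leg
      set W : Set (ℝ × ℝ) := Prod.snd ⁻¹' Ioo (b:ℝ) (j:ℝ) ∩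
        ({w : ℝ × ℝ | w.1 < r w.2} ∩ {w : ℝ × ℝ | 0 < w.1}) with hW_def
      have hWopen : IsOpen W :=
        (isOpen_Ioo.preimage continuous_snd).inter
          ((isOpen_lt continuous_fst (hrc.comp continuous_snd)).inter
            (isOpen_lt continuous_const continuous_fst))
      have hqW : q ∈ W := by
        refine ⟨⟨by linarith [hq2b.1], hq2b.2⟩, ?_, hqpos⟩
        have h1 : r s₁ ≤ r q.2 := hs₁min hq2I
        have h2 := (abs_lt.mp hq1).2
        show q.1 < r q.2
        linarith
      obtain ⟨s₂, hs₂I, hs₂max⟩ := isCompact_Icc.exists_isMaxOn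
        (nonempty_Icc.mpr (by linarith : (b:ℝ) ≤ (j:ℝ))) hrc.continuousOn
      have hWb : Bornology.IsBounded W := by
        apply ((Metric.isBounded_Icc 0 (r s₂)).prod (Metric.isBounded_Icc (b:ℝ) (j:ℝ))).subset
        rintro w ⟨hw1, hw2, hw3⟩
        refine ⟨⟨le_of_lt hw3, ?_⟩, Ioo_subset_Icc_self hw1⟩
        have := hs₂max (Ioo_subset_Icc_self hw1)
        show w.1 ≤ r s₂
        calc w.1 ≤ r w.2 := le_of_lt hw2
        _ ≤ r s₂ := this
      have hclW : closure W ⊆ W ∪ drawingSet (El ∪ Er) γ j := by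
        have hsub1 : closure W ⊆ Prod.snd ⁻¹' Icc (b:ℝ) (j:ℝ) ∩
            ({w : ℝ × ℝ | w.1 ≤ r w.2} ∩ {w : ℝ × ℝ | 0 ≤ w.1}) := by
          apply closure_minimal
          · rintro w ⟨hw1, hw2, hw3⟩
            refine ⟨Ioo_subset_Icc_self hw1, ?_, ?_⟩
            · show w.1 ≤ r w.2; exact le_of_lt hw2
            · show 0 ≤ w.1; exact le_of_lt hw3
          · exact (isClosed_Icc.preimage continuous_snd).inter
              ((isClosed_le continuous_fst (hrc.comp continuous_snd)).inter
                (isClosed_le continuous_const continuous_fst))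
        intro w hw
        obtain ⟨hw2, hwl, hwr⟩ := hsub1 hw
        replace hwl : w.1 ≤ r w.2 := hwl
        replace hwr : 0 ≤ w.1 := hwr
        rcases eq_or_lt_of_le hwr with h0' | h0'
        · right
          have hw' : w = ((0:ℝ), w.2) := Prod.ext h0'.symm rfl
          rw [hw']
          refine haxis j hj1 hjn w.2 ?_ hw2.2
          have : (0:ℝ) ≤ (b:ℝ) := Nat.cast_nonneg b
          linarith [hw2.1]
        · rcases eq_or_lt_of_le hwl with h1' | h1'
          · right
            have hw' : w = (r w.2, w.2) := Prod.ext h1' rfl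
            rw [hw']
            obtain ⟨t', ht', heq⟩ := hrIcc w.2 hw2
            exact mem_drawingSet.mpr ⟨(b,j), hbEU, le_rfl, t', ht', heq⟩
          · left
            refine ⟨⟨?_, ?_⟩, h1', h0'⟩
            · rcases eq_or_lt_of_le hw2.1 with h | h
              · exfalso
                rw [← h, hrA] at h1'
                linarith
              · exact h
            · rcases eq_or_lt_of_le hw2.2 with h | h
              · exfalso
                rw [h, hrB] at h1'
                linarith
              · exact h
      have hcover : (drawingSet (El ∪ Er) γ j)ᶜ ⊆ W ∪ (closure W)ᶜ := by
        intro u hu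
        by_cases hc' : u ∈ closure W
        · rcases hclW hc' with h | h
          · exact Or.inl h
          · exact absurd h hu
        · exact Or.inr hc'
      have hdisj : Disjoint W (closure W)ᶜ := by
        rw [Set.disjoint_left]
        intro x hx hx'
        exact hx' (subset_closure hx)
      have hKsub := IsPreconnected.subset_left_of_subset_union hWopen
        isClosed_closure.isOpen_compl hdisj
        (subset_trans (connectedComponentIn_subset _ _) hcover)
        ⟨q, mem_connectedComponentIn hqU, hqW⟩
        isPreconnected_connectedComponentIn
      exact hqunb (hWb.subset hKsub)
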